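/- Let $I$ be an index set with $|I| = k$ even. Then $\mathrm{Pf}\,F_I = \frac{1}{k/2+1}\sum_{I = I'\sqcup I''}(-1)^{(I'I'')}\frac{(|I'|/2)!\,(|I''|/2)!}{(k/2)!}\,\mathrm{Pf}\,F_{I'}\,\mathrm{Pf}\,F_{I''}$, where the sum runs over all ordered decompositions of $I$ into two disjoint subsets $I', I''$ of even cardinalities (including empty subsets, with $\mathrm{Pf}\,F_{\emptyset} = 1$). -/

import Mathlib

open scoped BigOperators

/-- Index set `{-n, …, n}` for the split orthogonal Lie algebra `o_{2n+1}`. -/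
abbrev Idx (n : ℕ) : Type := {i : ℤ // i ∈ Finset.Icc (-(n : ℤ)) (n : ℤ)}

namespace Idx
/-- Negation on the index set. -/
def neg {n : ℕ} (i : Idx n) : Idx n :=
  ⟨-i.1, by have := i.2; simp only [Finset.mem_Icc] at *; omega⟩
end Idx

/-- Noncommutative pfaffian of `F` along an enumeration `e : Fin (2m) → Idx n`:
`Pf = 1/(m! 2^m) ∑_σ sgn σ · F_{-e(σ 1), e(σ 2)} ⋯ F_{-e(σ(2m-1)), e(σ(2m))}`. -/
noncomputable def PfEnum {A : Type*} [Ring A] [Algebra ℚ A] {n : ℕ}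
    (F : Idx n → Idx n → A) (m : ℕ) (e : Fin (2 * m) → Idx n) : A :=
  ((m.factorial : ℚ) * 2 ^ m)⁻¹ •
    ∑ σ : Equiv.Perm (Fin (2 * m)),
      (Equiv.Perm.sign σ : ℤ) •
        (List.ofFn fun t : Fin m =>
          F (Idx.neg (e (σ ⟨2 * t.1, by have := t.2; omega⟩)))
            (e (σ ⟨2 * t.1 + 1, by have := t.2; omega⟩))).prod

/-- Noncommutative pfaffian `Pf F_I` of an (even-cardinality) indexing set `I`,
using the increasing enumeration of `I`. -/
noncomputable def PfSet {A : Type*} [Ring A] [Algebra ℚ A] {n : ℕ}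
    (F : Idx n → Idx n → A) (I : Finset (Idx n)) : A :=
  PfEnum F (I.card / 2) fun t =>
    (I.orderIsoOfFin rfl ⟨t.1, by have := t.2; omega⟩).1

/-- The defining commutation relations of the generators `F_{ij}` of `o_N`. -/
def OrthRel {A : Type*} [Ring A] {n : ℕ} (F : Idx n → Idx n → A) : Prop :=
  ∀ i j k l : Idx n,
    F i j * F k l - F k l * F i j =
      (if k = j then F i l else 0) - (if i = l then F k j else 0)
        - (if Idx.neg k = i then F (Idx.neg j) l else 0)
        + (if Idx.neg l = j then F k (Idx.neg i) else 0)

/-- The skew-symmetry `F_{ij} = -F_{-j,-i}` of the generators. -/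
def OrthSkew {A : Type*} [Ring A] {n : ℕ} (F : Idx n → Idx n → A) : Prop :=
  ∀ i j : Idx n, F i j = - F (Idx.neg j) (Idx.neg i)

/-- Sign of an arrangement (list) of elements of a linearly ordered type:
`(-1)^(number of inversions)`. -/
def arrSign {ι : Type*} [LinearOrder ι] (l : List ι) : ℤ :=
  (-1) ^ (((Finset.univ : Finset (Fin l.length × Fin l.length)).filter
      fun p => p.1 < p.2 ∧ l.get p.2 < l.get p.1).card)

/-- Shuffle sign `(-1)^{(I'I'')}` of the permutation placing `I'` (in natural order)
before `I''` (in natural order). -/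
def shuffleSign {ι : Type*} [LinearOrder ι] (I' I'' : Finset ι) : ℤ :=
  arrSign (I'.sort (· ≤ ·) ++ I''.sort (· ≤ ·))

namespace St9

open Equiv Finset

variable {A : Type*} [Ring A] [Algebra ℚ A] {n : ℕ}

/-- Product of the pair entries along an enumeration. -/
noncomputable def PP (F : Idx n → Idx n → A) (m : ℕ) (e : Fin (2 * m) → Idx n) : A :=
  (List.ofFn fun t : Fin m =>
    F (Idx.neg (e ⟨2 * t.1, by have := t.2; omega⟩))
      (e ⟨2 * t.1 + 1, by have := t.2; omega⟩)).prod

/-- Unnormalized pfaffian sum. -/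
noncomputable def TT (F : Idx n → Idx n → A) (m : ℕ) (e : Fin (2 * m) → Idx n) : A :=
  ∑ σ : Equiv.Perm (Fin (2 * m)), ((Equiv.Perm.sign σ : ℤ) : ℚ) • PP F m (e ∘ σ)

lemma PfEnum_eq (F : Idx n → Idx n → A) (m : ℕ) (e : Fin (2 * m) → Idx n) :
    PfEnum F m e = ((m.factorial : ℚ) * 2 ^ m)⁻¹ • TT F m e := by
  unfold PfEnum TT
  congr 1
  refine Finset.sum_congr rfl fun σ _ => ?_
  rw [Int.cast_smul_eq_zsmul]
  rfl

/-- `TT` along the canonical enumeration of a finset with even cardinality (else `0`). -/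
noncomputable def TTSet (F : Idx n → Idx n → A) (s : Finset (Idx n)) : A :=
  if h : 2 ∣ s.card then
    TT F (s.card / 2) (⇑(s.orderEmbOfFin (Nat.mul_div_cancel' h).symm))
  else 0

lemma TTSet_eq (F : Idx n → Idx n → A) (s : Finset (Idx n)) (mm : ℕ)
    (h : s.card = 2 * mm) :
    TTSet F s = TT F mm (⇑(s.orderEmbOfFin h)) := by
  have h2 : 2 ∣ s.card := ⟨mm, h⟩
  rw [TTSet, dif_pos h2]
  have hmm : s.card / 2 = mm := by omega
  subst hmm
  rfl

lemma PfSet_eq_TTSet (F : Idx n → Idx n → A) (s : Finset (Idx n)) (mm : ℕ)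
    (h : s.card = 2 * mm) :
    PfSet F s = ((mm.factorial : ℚ) * 2 ^ mm)⁻¹ • TTSet F s := by
  rw [TTSet_eq F s mm h]
  unfold PfSet
  have hmm : s.card / 2 = mm := by omega
  subst hmm
  rw [PfEnum_eq]
  have : (fun t : Fin (2 * (s.card / 2)) =>
      (s.orderIsoOfFin rfl ⟨t.1, by have := t.2; omega⟩).1) =
      ⇑(s.orderEmbOfFin h) := by
    funext t
    rw [Finset.coe_orderIsoOfFin_apply]
    exact Finset.orderEmbOfFin_eq_orderEmbOfFin_iff.mpr rfl
  rw [this]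



/-- Inversion count of a map on `Fin N` into a linear order. -/
def invC {N : ℕ} {ι : Type*} [LinearOrder ι] (f : Fin N → ι) : ℕ :=
  ((Finset.univ : Finset (Fin N × Fin N)).filter fun p => p.1 < p.2 ∧ f p.2 < f p.1).card

lemma sign_eq_signAux {N : ℕ} (f : Equiv.Perm (Fin N)) :
    Equiv.Perm.sign f = Equiv.Perm.signAux f := by
  refine Equiv.Perm.swap_induction_on f ?_ ?_
  · rw [Equiv.Perm.sign_one, Equiv.Perm.signAux_one]
  · intro g x y hxy ih
    rw [Equiv.Perm.sign_mul, Equiv.Perm.signAux_mul, ih, Equiv.Perm.sign_swap hxy,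
      Equiv.Perm.signAux_swap hxy]

lemma sign_eq_invC {N : ℕ} (f : Equiv.Perm (Fin N)) :
    (Equiv.Perm.sign f : ℤ) = (-1) ^ invC (⇑f) := by
  rw [sign_eq_signAux]
  unfold Equiv.Perm.signAux
  rw [Finset.prod_ite, Finset.prod_const, Finset.prod_const, one_pow, mul_one]
  have hcard : ((Equiv.Perm.finPairsLT N).filter fun x => f x.1 ≤ f x.2).card
      = invC (⇑f) := by
    unfold invC
    refine Finset.card_bij (fun a _ => (a.2, a.1)) ?_ ?_ ?_
    · intro a ha
      rw [Finset.mem_filter] at ha ⊢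
      obtain ⟨h1, h2⟩ := ha
      rw [Equiv.Perm.mem_finPairsLT] at h1
      refine ⟨Finset.mem_univ _, h1, lt_of_le_of_ne h2 ?_⟩
      intro hEq
      exact absurd (f.injective hEq) (ne_of_gt h1)
    · intro a₁ h₁ a₂ h₂ hEq
      simp only [Prod.mk.injEq] at hEq
      exact Sigma.ext hEq.2 (heq_of_eq hEq.1)
    · intro b hb
      rw [Finset.mem_filter] at hb
      obtain ⟨-, h1, h2⟩ := hb
      refine ⟨⟨b.2, b.1⟩, ?_, rfl⟩
      rw [Finset.mem_filter, Equiv.Perm.mem_finPairsLT]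
      exact ⟨h1, le_of_lt h2⟩
  rw [hcard]
  push_cast
  rfl



section blocks

variable {X : Type*} {A : Type*} [Ring A]

/-- The block equivalence `Fin (2(j+l)) ≃ Fin (2j) ⊕ Fin (2l)`. -/
def qe (j l : ℕ) : Fin (2*(j+l)) ≃ (Fin (2*j) ⊕ Fin (2*l)) :=
  (finCongr (by ring : 2*(j+l) = 2*j+2*l)).trans finSumFinEquiv.symm

lemma qe_apply_left {j l : ℕ} (x : Fin (2*(j+l))) (hv : x.1 < 2*j) :
    qe j l x = Sum.inl ⟨x.1, hv⟩ := by
  unfold qe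
  simp only [Equiv.trans_apply, finCongr_apply]
  rw [show (Fin.cast (by ring) x : Fin (2*j+2*l)) = Fin.castAdd (2*l) ⟨x.1, hv⟩ from rfl,
    finSumFinEquiv_symm_apply_castAdd]

lemma qe_apply_right {j l : ℕ} (x : Fin (2*(j+l))) (hv : 2*j ≤ x.1)
    (hw : x.1 - 2*j < 2*l) :
    qe j l x = Sum.inr ⟨x.1 - 2*j, hw⟩ := by
  unfold qe
  simp only [Equiv.trans_apply, finCongr_apply]
  rw [show (Fin.cast (by ring) x : Fin (2*j+2*l)) = Fin.natAdd (2*j) ⟨x.1 - 2*j, hw⟩ by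
      apply Fin.ext; simp; omega,
    finSumFinEquiv_symm_apply_natAdd]

/-- Concatenation of two enumerations. -/
def catF {j l : ℕ} (e' : Fin (2*j) → X) (e'' : Fin (2*l) → X) :
    Fin (2*(j+l)) → X := fun x => Sum.elim e' e'' (qe j l x)

lemma catF_left {j l : ℕ} (e' : Fin (2*j) → X) (e'' : Fin (2*l) → X)
    (x : Fin (2*(j+l))) (hv : x.1 < 2*j) : catF e' e'' x = e' ⟨x.1, hv⟩ := by
  rw [catF, qe_apply_left x hv, Sum.elim_inl]

lemma catF_right {j l : ℕ} (e' : Fin (2*j) → X) (e'' : Fin (2*l) → X)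
    (x : Fin (2*(j+l))) (hv : 2*j ≤ x.1) (hw : x.1 - 2*j < 2*l) :
    catF e' e'' x = e'' ⟨x.1 - 2*j, hw⟩ := by
  rw [catF, qe_apply_right x hv hw, Sum.elim_inr]

/-- The block-diagonal permutation. -/
def iE {j l : ℕ} (σ' : Equiv.Perm (Fin (2*j))) (σ'' : Equiv.Perm (Fin (2*l))) :
    Equiv.Perm (Fin (2*(j+l))) :=
  Equiv.permCongr (qe j l).symm (Equiv.Perm.sumCongr σ' σ'')

lemma iE_apply {j l : ℕ} (σ' : Equiv.Perm (Fin (2*j))) (σ'' : Equiv.Perm (Fin (2*l)))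
    (x : Fin (2*(j+l))) :
    iE σ' σ'' x = (qe j l).symm ((Equiv.Perm.sumCongr σ' σ'') (qe j l x)) := rfl

lemma sign_iE {j l : ℕ} (σ' : Equiv.Perm (Fin (2*j))) (σ'' : Equiv.Perm (Fin (2*l))) :
    Equiv.Perm.sign (iE σ' σ'') = Equiv.Perm.sign σ' * Equiv.Perm.sign σ'' := by
  rw [iE, Equiv.Perm.sign_permCongr, Equiv.Perm.sign_sumCongr]

lemma catF_comp_iE {j l : ℕ} (e' : Fin (2*j) → X) (e'' : Fin (2*l) → X)
    (σ' : Equiv.Perm (Fin (2*j))) (σ'' : Equiv.Perm (Fin (2*l))) :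
    catF e' e'' ∘ (iE σ' σ'') = catF (e' ∘ σ') (e'' ∘ σ'') := by
  funext x
  simp only [Function.comp_apply, catF, iE_apply, Equiv.apply_symm_apply]
  cases hq : qe j l x with
  | inl a => simp [Equiv.Perm.sumCongr_apply]
  | inr b => simp [Equiv.Perm.sumCongr_apply]

end blocks


lemma image_orderEmbOfFin {α : Type*} [LinearOrder α] (s : Finset α) {k : ℕ}
    (h : s.card = k) :
    Finset.image (⇑(s.orderEmbOfFin h)) Finset.univ = s := by
  ext x
  simp only [Finset.mem_image, Finset.mem_univ, true_and]
  constructor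
  · rintro ⟨i, rfl⟩; exact Finset.orderEmbOfFin_mem s h i
  · intro hx
    refine ⟨(s.orderIsoOfFin h).symm ⟨x, hx⟩, ?_⟩
    rw [← Finset.coe_orderIsoOfFin_apply, OrderIso.apply_symm_apply]

lemma qsmul_mul (a b : ℚ) (x y : A) : (a • x) * (b • y) = (a*b) • (x*y) := by
  rw [smul_mul_assoc, mul_smul_comm, smul_smul]

lemma arrSign_eq {ι : Type*} [LinearOrder ι] (lst : List ι) {N : ℕ}
    (h : lst.length = N) (f : Fin N → ι)
    (hf : ∀ p : Fin N, lst.get (Fin.cast h.symm p) = f p) :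
    arrSign lst = (-1 : ℤ) ^ invC f := by
  subst h
  unfold arrSign invC
  refine congrArg _ (congrArg Finset.card (Finset.filter_congr fun p _ => ?_))
  have h1 : lst.get p.1 = f p.1 := hf p.1
  have h2 : lst.get p.2 = f p.2 := hf p.2
  rw [h1, h2]

lemma PP_catF (F : Idx n → Idx n → A) (j l : ℕ)
    (e' : Fin (2*j) → Idx n) (e'' : Fin (2*l) → Idx n) :
    PP F (j+l) (catF e' e'') = PP F j e' * PP F l e'' := by
  unfold PP
  rw [List.ofFn_add, List.prod_append]
  congr 1
  · refine congrArg List.prod (congrArg List.ofFn (funext fun i => ?_))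
    have h0 : (2 * (Fin.castAdd l i).1) < 2*j := by
      have := i.2; simp only [Fin.coe_castAdd]; omega
    have h1 : (2 * (Fin.castAdd l i).1 + 1) < 2*j := by
      have := i.2; simp only [Fin.coe_castAdd]; omega
    rw [catF_left e' e'' _ h0, catF_left e' e'' _ h1]
    rfl
  · refine congrArg List.prod (congrArg List.ofFn (funext fun t => ?_))
    have hv0 : 2*j ≤ 2 * (Fin.natAdd j t).1 := by
      simp only [Fin.coe_natAdd]; omega
    have hw0 : 2 * (Fin.natAdd j t).1 - 2*j < 2*l := by
      have := t.2; simp only [Fin.coe_natAdd]; omega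
    have hv1 : 2*j ≤ 2 * (Fin.natAdd j t).1 + 1 := by
      simp only [Fin.coe_natAdd]; omega
    have hw1 : 2 * (Fin.natAdd j t).1 + 1 - 2*j < 2*l := by
      have := t.2; simp only [Fin.coe_natAdd]; omega
    rw [catF_right e' e'' _ hv0 hw0, catF_right e' e'' _ hv1 hw1]
    exact congrArg₂ F
      (congrArg Idx.neg (congrArg e'' (Fin.ext (by simp; omega))))
      (congrArg e'' (Fin.ext (by simp; omega)))



lemma getElem_eq_of_eq {α : Type*} (L : List α) {a b : ℕ} (h : a = b)
    (ha : a < L.length) : L[a] = L[b]'(h ▸ ha) := by subst h; rfl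

set_option maxHeartbeats 4000000 in
lemma fiber (F : Idx n → Idx n → A) (j l : ℕ) (I : Finset (Idx n))
    (hc : I.card = 2*(j+l)) :
    ∑ I' ∈ I.powerset.filter (fun s => s.card = 2*j),
      ((shuffleSign I' (I \ I') : ℤ) : ℚ) • (TTSet F I' * TTSet F (I \ I'))
    = TTSet F I := by
  classical
  rw [TTSet_eq F I (j+l) hc]
  set e : Fin (2*(j+l)) → Idx n := ⇑(I.orderEmbOfFin hc) with he
  have hemem : ∀ x, e x ∈ I := fun x => Finset.orderEmbOfFin_mem I hc x
  rw [TT]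
  have hmaps : ∀ σ : Equiv.Perm (Fin (2*(j+l))), σ ∈ (Finset.univ : Finset _) →
      (Finset.image (fun t : Fin (2*j) => e (σ ((qe j l).symm (Sum.inl t)))) Finset.univ)
        ∈ I.powerset.filter (fun s => s.card = 2*j) := by
    intro σ _
    rw [Finset.mem_filter, Finset.mem_powerset]
    constructor
    · intro x hx
      rw [Finset.mem_image] at hx
      obtain ⟨t, -, rfl⟩ := hx
      exact hemem _
    · rw [Finset.card_image_of_injective _ (by
        intro a b hab
        exact Sum.inl_injective ((qe j l).symm.injective
          (σ.injective ((I.orderEmbOfFin hc).injective hab)))),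
        Finset.card_univ, Fintype.card_fin]
  rw [← Finset.sum_fiberwise_of_maps_to hmaps]
  refine Finset.sum_congr rfl fun I' hI' => ?_
  rw [Finset.mem_filter, Finset.mem_powerset] at hI'
  obtain ⟨hsub, hcard'⟩ := hI'
  have hcard'' : (I \ I').card = 2*l := by
    rw [Finset.card_sdiff_of_subset hsub]; omega
  set e' : Fin (2*j) → Idx n := ⇑(I'.orderEmbOfFin hcard') with he'
  set e'' : Fin (2*l) → Idx n := ⇑((I \ I').orderEmbOfFin hcard'') with he''
  have he'mem : ∀ x, e' x ∈ I' := fun x => Finset.orderEmbOfFin_mem I' hcard' x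
  have he''mem : ∀ x, e'' x ∈ I \ I' := fun x =>
    Finset.orderEmbOfFin_mem (I \ I') hcard'' x
  set cF : Fin (2*(j+l)) → Idx n := catF e' e'' with hcF
  have hcFelim : ∀ x, cF x = Sum.elim e' e'' (qe j l x) := fun x => rfl
  have hcFmem : ∀ x, cF x ∈ I := by
    intro x
    rw [hcFelim]
    cases qe j l x with
    | inl a => exact hsub (he'mem a)
    | inr b => exact Finset.sdiff_subset (he''mem b)
  have hcFinj : Function.Injective cF := by
    have : Function.Injective (Sum.elim e' e'') := by
      refine Function.Injective.sumElim (I'.orderEmbOfFin hcard').injective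
        ((I \ I').orderEmbOfFin hcard'').injective ?_
      intro a b hEq
      have h1 := he'mem a
      have h2 := he''mem b
      rw [← hEq, Finset.mem_sdiff] at h2
      exact h2.2 h1
    intro a b hab
    exact (qe j l).injective (this hab)
  have hbijC : Function.Bijective (fun t => (⟨cF t, hcFmem t⟩ : {x // x ∈ I})) := by
    rw [Fintype.bijective_iff_injective_and_card]
    constructor
    · intro a b hab
      exact hcFinj (congrArg Subtype.val hab)
    · rw [Fintype.card_coe, hc, Fintype.card_fin]
  set C : Fin (2*(j+l)) ≃ {x // x ∈ I} := Equiv.ofBijective _ hbijC with hC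
  set E : Fin (2*(j+l)) ≃ {x // x ∈ I} := (I.orderIsoOfFin hc).toEquiv with hE
  have hEval : ∀ x, (E x : Idx n) = e x := fun x => Finset.coe_orderIsoOfFin_apply I hc x
  set π : Equiv.Perm (Fin (2*(j+l))) := C.trans E.symm with hπ
  have hEPI : ∀ x, e (π x) = cF x := by
    intro x
    rw [← hEval]
    show ((E (E.symm (C x))) : Idx n) = cF x
    rw [E.apply_symm_apply]
    rfl
  -- the sign of π is the shuffle sign
  have hlen1 : (I'.sort (· ≤ ·)).length = 2*j := by
    rw [Finset.length_sort, hcard']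
  have hSGN : shuffleSign I' (I \ I') = ((Equiv.Perm.sign π : ℤˣ) : ℤ) := by
    have hlen : (I'.sort (· ≤ ·) ++ (I \ I').sort (· ≤ ·)).length = 2*(j+l) := by
      simp only [List.length_append, Finset.length_sort, hcard', hcard'']; omega
    have hget : ∀ p : Fin (2*(j+l)),
        (I'.sort (· ≤ ·) ++ (I \ I').sort (· ≤ ·)).get (Fin.cast hlen.symm p)
          = (e ∘ ⇑π) p := by
      intro p
      simp only [List.get_eq_getElem, Fin.coe_cast, Function.comp_apply, hEPI]
      by_cases hp : p.1 < 2*j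
      · rw [List.getElem_append_left (by rw [hlen1]; exact hp)]
        rw [hcF, catF_left e' e'' p hp]
        exact (Finset.orderEmbOfFin_apply I' hcard' ⟨p.1, hp⟩).symm
      · push_neg at hp
        have hw : p.1 - 2*j < 2*l := by have := p.2; omega
        rw [List.getElem_append_right (by rw [hlen1]; exact hp)]
        rw [hcF, catF_right e' e'' p hp hw]
        have hidx : p.1 - (I'.sort (· ≤ ·)).length = p.1 - 2*j := by rw [hlen1]
        exact (getElem_eq_of_eq _ hidx _).trans
          (Finset.orderEmbOfFin_apply (I \ I') hcard'' ⟨p.1 - 2*j, hw⟩).symm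
    rw [shuffleSign, arrSign_eq _ hlen (e ∘ ⇑π) hget]
    have hinv : invC (e ∘ ⇑π) = invC ⇑π := by
      unfold invC
      refine congrArg Finset.card (Finset.filter_congr fun p _ => ?_)
      simp only [Function.comp_apply]
      exact and_congr Iff.rfl (by rw [he]; exact (I.orderEmbOfFin hc).lt_iff_lt)
    rw [hinv, ← sign_eq_invC]
  -- the inner fiber sum equals the product
  have hstep : ∑ σ ∈ Finset.univ.filter (fun σ : Equiv.Perm (Fin (2*(j+l))) =>
        Finset.image (fun t : Fin (2*j) => e (σ ((qe j l).symm (Sum.inl t)))) Finset.univ = I'),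
        ((Equiv.Perm.sign σ : ℤ) : ℚ) • PP F (j+l) (e ∘ σ)
      = ∑ p : Equiv.Perm (Fin (2*j)) × Equiv.Perm (Fin (2*l)),
        ((Equiv.Perm.sign (π * iE p.1 p.2) : ℤ) : ℚ) • PP F (j+l) (e ∘ ⇑(π * iE p.1 p.2)) := by
    refine (Finset.sum_bij (fun p _ => π * iE p.1 p.2) ?_ ?_ ?_ (fun p _ => rfl)).symm
    · -- lands in the fiber
      intro p _
      rw [Finset.mem_filter]
      refine ⟨Finset.mem_univ _, ?_⟩
      have hfun : (fun t : Fin (2*j) => e ((π * iE p.1 p.2) ((qe j l).symm (Sum.inl t))))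
          = e' ∘ ⇑p.1 := by
        funext t
        rw [Function.comp_apply, Equiv.Perm.mul_apply, hEPI, hcFelim, iE_apply,
          Equiv.apply_symm_apply, Equiv.apply_symm_apply]
        simp [Equiv.Perm.sumCongr_apply]
      rw [hfun, ← Finset.image_image, Finset.image_univ_equiv]
      exact image_orderEmbOfFin I' hcard'
    · -- injective
      intro p1 _ p2 _ hEq
      have hEq2 : iE p1.1 p1.2 = iE p2.1 p2.2 := mul_left_cancel hEq
      have hl1 : p1.1 = p2.1 := by
        refine Equiv.ext fun t => ?_
        have h := congrArg (fun (s : Equiv.Perm (Fin (2*(j+l)))) =>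
          s ((qe j l).symm (Sum.inl t))) hEq2
        simp only [iE_apply, Equiv.apply_symm_apply, Equiv.Perm.sumCongr_apply,
          Sum.map_inl] at h
        exact Sum.inl_injective ((qe j l).symm.injective h)
      have hl2 : p1.2 = p2.2 := by
        refine Equiv.ext fun t => ?_
        have h := congrArg (fun (s : Equiv.Perm (Fin (2*(j+l)))) =>
          s ((qe j l).symm (Sum.inr t))) hEq2
        simp only [iE_apply, Equiv.apply_symm_apply, Equiv.Perm.sumCongr_apply,
          Sum.map_inr] at h
        exact Sum.inr_injective ((qe j l).symm.injective h)
      exact Prod.ext hl1 hl2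
    · -- surjective
      intro σ hσ
      rw [Finset.mem_filter] at hσ
      obtain ⟨-, himg⟩ := hσ
      set ρ : Equiv.Perm (Fin (2*(j+l))) := π⁻¹ * σ with hρ
      have hσρ : σ = π * ρ := by rw [hρ, mul_inv_cancel_left]
      have hLeft : ∀ t : Fin (2*j), ∃ t',
          qe j l (ρ ((qe j l).symm (Sum.inl t))) = Sum.inl t' := by
        intro t
        cases hq : qe j l (ρ ((qe j l).symm (Sum.inl t))) with
        | inl t' => exact ⟨t', rfl⟩
        | inr s' =>
          exfalso
          have hmem1 : e (σ ((qe j l).symm (Sum.inl t))) ∈ I' := by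
            rw [← himg]
            exact Finset.mem_image_of_mem _ (Finset.mem_univ t)
          have hEq : e (σ ((qe j l).symm (Sum.inl t))) = e'' s' := by
            rw [hσρ, Equiv.Perm.mul_apply, hEPI, hcFelim, hq, Sum.elim_inr]
          rw [hEq] at hmem1
          have h2 := he''mem s'
          rw [Finset.mem_sdiff] at h2
          exact h2.2 hmem1
      choose gL hgL using hLeft
      have hgLinj : Function.Injective gL := by
        intro a b hab
        have h : qe j l (ρ ((qe j l).symm (Sum.inl a)))
            = qe j l (ρ ((qe j l).symm (Sum.inl b))) := by
          rw [hgL a, hgL b, hab]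
        exact Sum.inl_injective ((qe j l).symm.injective
          (ρ.injective ((qe j l).injective h)))
      have hgLbij : Function.Bijective gL := Finite.injective_iff_bijective.mp hgLinj
      have hRight : ∀ u : Fin (2*l), ∃ u',
          qe j l (ρ ((qe j l).symm (Sum.inr u))) = Sum.inr u' := by
        intro u
        cases hq : qe j l (ρ ((qe j l).symm (Sum.inr u))) with
        | inr u' => exact ⟨u', rfl⟩
        | inl t' =>
          exfalso
          obtain ⟨t₀, ht₀⟩ := hgLbij.2 t'
          have h1 : ρ ((qe j l).symm (Sum.inl t₀)) = (qe j l).symm (Sum.inl t') := by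
            apply (qe j l).injective
            rw [hgL t₀, ht₀, Equiv.apply_symm_apply]
          have h2 : ρ ((qe j l).symm (Sum.inr u)) = (qe j l).symm (Sum.inl t') := by
            apply (qe j l).injective
            rw [hq, Equiv.apply_symm_apply]
          have h3 := ρ.injective (h1.trans h2.symm)
          have h4 := (qe j l).symm.injective h3
          exact Sum.inl_ne_inr h4
      choose gR hgR using hRight
      have hgRinj : Function.Injective gR := by
        intro a b hab
        have h : qe j l (ρ ((qe j l).symm (Sum.inr a)))
            = qe j l (ρ ((qe j l).symm (Sum.inr b))) := by
          rw [hgR a, hgR b, hab]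
        exact Sum.inr_injective ((qe j l).symm.injective
          (ρ.injective ((qe j l).injective h)))
      have hgRbij : Function.Bijective gR := Finite.injective_iff_bijective.mp hgRinj
      have hiEρ : iE (Equiv.ofBijective gL hgLbij) (Equiv.ofBijective gR hgRbij) = ρ := by
        refine Equiv.ext fun x => ?_
        rw [iE_apply]
        cases hq : qe j l x with
        | inl t =>
          have hx : x = (qe j l).symm (Sum.inl t) := by rw [← hq, Equiv.symm_apply_apply]
          have hρx : ρ x = (qe j l).symm (Sum.inl (gL t)) := by
            rw [hx]
            apply (qe j l).injective
            rw [hgL, Equiv.apply_symm_apply]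
          rw [hρx]
          refine congrArg (qe j l).symm ?_
          rw [Equiv.Perm.sumCongr_apply, Sum.map_inl]
          rfl
        | inr u =>
          have hx : x = (qe j l).symm (Sum.inr u) := by rw [← hq, Equiv.symm_apply_apply]
          have hρx : ρ x = (qe j l).symm (Sum.inr (gR u)) := by
            rw [hx]
            apply (qe j l).injective
            rw [hgR, Equiv.apply_symm_apply]
          rw [hρx]
          refine congrArg (qe j l).symm ?_
          rw [Equiv.Perm.sumCongr_apply, Sum.map_inr]
          rfl
      refine ⟨⟨Equiv.ofBijective gL hgLbij, Equiv.ofBijective gR hgRbij⟩,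
        Finset.mem_univ _, ?_⟩
      show π * iE (Equiv.ofBijective gL hgLbij) (Equiv.ofBijective gR hgRbij) = σ
      rw [hiEρ]
      exact hσρ.symm
  rw [hstep, TTSet_eq F I' j hcard', TTSet_eq F (I \ I') l hcard'', ← he', ← he'',
    TT, TT, Finset.sum_mul_sum, hSGN, Finset.smul_sum, Fintype.sum_prod_type]
  refine Finset.sum_congr rfl fun σ' _ => ?_
  rw [Finset.smul_sum]
  refine Finset.sum_congr rfl fun σ'' _ => ?_
  have hcomp : e ∘ ⇑(π * iE σ' σ'') = catF (e' ∘ ⇑σ') (e'' ∘ ⇑σ'') := by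
    rw [← catF_comp_iE, ← hcF]
    funext x
    rw [Function.comp_apply, Function.comp_apply, Equiv.Perm.mul_apply, hEPI]
  rw [hcomp, PP_catF, qsmul_mul, smul_smul]
  congr 1
  rw [Equiv.Perm.sign_mul, sign_iE]
  push_cast
  ring

end St9

set_option maxHeartbeats 1000000 in
/-- the summation formula
`Pf F_I = 1/(k/2+1) ∑_{I = I'⊔I''} (-1)^{(I'I'')} (|I'|/2)!(|I''|/2)!/(k/2)! Pf F_{I'} Pf F_{I''}`,
the sum running over all ordered decompositions of `I` into two disjoint subsets of even
cardinality (including empty ones; `Pf F_∅ = 1`). -/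
theorem statement9 {A : Type*} [Ring A] [Algebra ℚ A] (n : ℕ)
    (F : Idx n → Idx n → A) (hrel : OrthRel F) (hskew : OrthSkew F)
    (I : Finset (Idx n)) (m : ℕ) (hI : I.card = 2 * m) :
    PfSet F I =
      ((m : ℚ) + 1)⁻¹ •
        ∑ I' ∈ I.powerset.filter fun s => Even s.card,
          (((I'.card / 2).factorial * ((I \ I').card / 2).factorial : ℚ) / (m.factorial : ℚ)) •
            ((shuffleSign I' (I \ I') : ℤ) • (PfSet F I' * PfSet F (I \ I'))) := by
  classical
  rw [St9.PfSet_eq_TTSet F I m hI]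
  have hmaps : ∀ s ∈ I.powerset.filter (fun s => Even s.card),
      s.card / 2 ∈ Finset.range (m+1) := by
    intro s hs
    rw [Finset.mem_filter, Finset.mem_powerset] at hs
    rw [Finset.mem_range]
    have := Finset.card_le_card hs.1
    omega
  rw [← Finset.sum_fiberwise_of_maps_to hmaps]
  have hfilter : ∀ jj : ℕ, (I.powerset.filter (fun s => Even s.card)).filter
      (fun s => s.card / 2 = jj) = I.powerset.filter (fun s => s.card = 2*jj) := by
    intro jj
    rw [Finset.filter_filter]
    refine Finset.filter_congr fun s _ => ?_
    constructor
    · rintro ⟨⟨k, hk⟩, h2⟩; omega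
    · intro h; exact ⟨⟨jj, by omega⟩, by omega⟩
  have hinner : ∀ jj ∈ Finset.range (m+1),
      (∑ I' ∈ (I.powerset.filter (fun s => Even s.card)).filter
          (fun s => s.card / 2 = jj),
        (((I'.card / 2).factorial * ((I \ I').card / 2).factorial : ℚ) /
            (m.factorial : ℚ)) •
          ((shuffleSign I' (I \ I') : ℤ) • (PfSet F I' * PfSet F (I \ I'))))
      = ((m.factorial : ℚ) * 2^m)⁻¹ • St9.TTSet F I := by
    intro jj hjj
    rw [Finset.mem_range] at hjj
    rw [hfilter jj]
    have hfib := St9.fiber F jj (m - jj) I (by omega)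
    rw [← hfib, Finset.smul_sum]
    refine Finset.sum_congr rfl fun I' hI' => ?_
    rw [Finset.mem_filter, Finset.mem_powerset] at hI'
    obtain ⟨hsub, hc'⟩ := hI'
    have hc'' : (I \ I').card = 2*(m - jj) := by
      rw [Finset.card_sdiff_of_subset hsub]; omega
    rw [St9.PfSet_eq_TTSet F I' jj hc', St9.PfSet_eq_TTSet F (I \ I') (m - jj) hc'']
    rw [hc', hc'']
    have hd1 : 2 * jj / 2 = jj := by omega
    have hd2 : 2 * (m - jj) / 2 = m - jj := by omega
    rw [hd1, hd2]
    rw [← Int.cast_smul_eq_zsmul ℚ ((shuffleSign I' (I \ I') : ℤ))]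
    rw [St9.qsmul_mul, smul_smul, smul_smul, smul_smul]
    congr 1
    have h1 : (jj.factorial : ℚ) ≠ 0 := Nat.cast_ne_zero.mpr (Nat.factorial_ne_zero _)
    have h2 : ((m - jj).factorial : ℚ) ≠ 0 :=
      Nat.cast_ne_zero.mpr (Nat.factorial_ne_zero _)
    have h3 : (m.factorial : ℚ) ≠ 0 := Nat.cast_ne_zero.mpr (Nat.factorial_ne_zero _)
    have hpow : (2:ℚ)^jj * 2^(m-jj) = 2^m := by
      rw [← pow_add]
      congr 1
      omega
    have h4 : (2:ℚ)^jj ≠ 0 := by positivity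
    have h5 : (2:ℚ)^(m-jj) ≠ 0 := by positivity
    have h6 : (2:ℚ)^m ≠ 0 := by positivity
    field_simp
    rw [← hpow]
    ring
  rw [Finset.sum_congr rfl hinner, Finset.sum_const, Finset.card_range]
  rw [← Nat.cast_smul_eq_nsmul ℚ, smul_smul]
  have : ((m : ℚ) + 1)⁻¹ * ((m + 1 : ℕ) : ℚ) = 1 := by
    push_cast
    rw [inv_mul_cancel₀]
    positivity
  rw [this, one_smul]
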